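/- arXiv:1907.07336 — 3 statements merged into one kernel-verified Lean document; each statement's English description precedes it below -/
import Mathlib

section
/- Let S be a timelike photon surface of a spacetime (M, g) with dim M ≥ 3, let n be the unit normal of S, let γ be a null geodesic contained in S passing through a point p ∈ S with tangent vector k, and let X be a deviation vector field along γ (a solution of the geodesic deviation equation) satisfying X|_p ∝ n|_p. Then the acceleration scalar a := g(X, ∇_k∇_k X) at p equals −X² R_{acbd} n^a k^c n^b k^d, where X² := g_{ab}X^aX^b > 0 and R is the Riemann curvature tensor of (M, g). Consequently γ is stable at p (a|_p < 0) if and only if R_{acbd} k^a n^c k^b n^d > 0 at p, unstable at p (a|_p > 0) if and only if R_{acbd} k^a n^c k^b n^d < 0 at p, and marginally stable at p (a|_p = 0) if and only if R_{acbd} k^a n^c k^b n^d = 0 at p. -/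
set_option autoImplicit false

noncomputable section

/-- An abstract `D`-dimensional spacetime `(M, g)`: a family of tangent spaces over a
type of points, equipped with a Lorentzian metric, curvature tensors and covariant
derivative operators.  The standard differential-geometric identities relating these
data that are relevant below are recorded as fields, so that the structure is an
axiomatisation of a smooth Lorentzian manifold. -/
structure Spacetime (D : ℕ) where
  /-- the points of the spacetime manifold `M` -/
  Point : Type
  /-- the tangent space at each point -/
  Vec : Point → Type
  [vecGroup : ∀ p : Point, AddCommGroup (Vec p)]
  [vecModule : ∀ p : Point, Module ℝ (Vec p)]
  [vecFin : ∀ p : Point, FiniteDimensional ℝ (Vec p)]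
  dim_eq : ∀ p : Point, Module.finrank ℝ (Vec p) = D
  /-- the metric at each point, as a bilinear form -/
  g : ∀ p : Point, Vec p →ₗ[ℝ] Vec p →ₗ[ℝ] ℝ
  g_symm : ∀ (p : Point) (u v : Vec p), g p u v = g p v u
  g_nondeg : ∀ (p : Point) (u : Vec p), (∀ v : Vec p, g p u v = 0) → u = 0
  /-- Lorentzian signature `(-,+,⋯,+)` -/
  lorentzian : ∀ p : Point, ∃ b : Module.Basis (Fin D) ℝ (Vec p), ∀ i j : Fin D,
    g p (b i) (b j) = if i = j then (if (i : ℕ) = 0 then (-1 : ℝ) else 1) else 0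
  /-- `IsVelocity c v` asserts that `v t ∈ T_{c t} M` is the velocity (tangent) field
  of the smooth curve `c : ℝ → M`. -/
  IsVelocity : (c : ℝ → Point) → (∀ t, Vec (c t)) → Prop
  /-- covariant derivative of a vector field along a curve -/
  covDerivAlong : (c : ℝ → Point) → (∀ t, Vec (c t)) → (∀ t, Vec (c t))
  /-- directional derivative of a scalar field -/
  dirDeriv : (Point → ℝ) → ∀ p : Point, Vec p →ₗ[ℝ] ℝ
  /-- covariant derivative `∇Y` of a vector field, linear in the direction -/
  covDerivVF : (∀ p, Vec p) → ∀ p : Point, Vec p →ₗ[ℝ] Vec p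
  /-- covariant derivative `(∇_u T)(·,·)` of a `(0,2)`-tensor field in a direction `u` -/
  covDeriv2 : (∀ p, Vec p → Vec p → ℝ) → ∀ p : Point, Vec p → (Vec p → Vec p → ℝ)
  dirDeriv_const : ∀ (a : ℝ) (p : Point) (u : Vec p), dirDeriv (fun _ => a) p u = 0
  /-- metric compatibility of the covariant derivative -/
  metric_compat : ∀ (Y Z : ∀ p, Vec p) (p : Point) (u : Vec p),
    dirDeriv (fun q => g q (Y q) (Z q)) p u
      = g p (covDerivVF Y p u) (Z p) + g p (Y p) (covDerivVF Z p u)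
  /-- along a curve, `(T(W,W))' = (∇_{ċ} T)(W,W)` whenever `W` is parallel -/
  covDeriv2_parallel : ∀ (T : ∀ p, Vec p → Vec p → ℝ) (c : ℝ → Point)
    (v : ∀ t, Vec (c t)), IsVelocity c v →
    ∀ (W : ∀ t, Vec (c t)), (∀ t, covDerivAlong c W t = 0) →
    ∀ t : ℝ, HasDerivAt (fun s => T (c s) (W s) (W s)) (covDeriv2 T (c t) (v t) (W t) (W t)) t
  /-- the Riemann curvature tensor, fully covariant:
  `Riemann p x y z w = R_{abcd} x^a y^b z^c w^d` -/
  Riemann : ∀ p : Point, Vec p →ₗ[ℝ] Vec p →ₗ[ℝ] Vec p →ₗ[ℝ] Vec p →ₗ[ℝ] ℝ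
  riemann_antisym₁ : ∀ (p : Point) (x y z w : Vec p), Riemann p x y z w = - Riemann p y x z w
  riemann_antisym₂ : ∀ (p : Point) (x y z w : Vec p), Riemann p x y z w = - Riemann p x y w z
  riemann_pair_symm : ∀ (p : Point) (x y z w : Vec p), Riemann p x y z w = Riemann p z w x y
  /-- the Ricci tensor -/
  Ricci : ∀ p : Point, Vec p →ₗ[ℝ] Vec p →ₗ[ℝ] ℝ
  ricci_symm : ∀ (p : Point) (x y : Vec p), Ricci p x y = Ricci p y x
  /-- the scalar curvature -/
  Scal : Point → ℝ
  /-- the Weyl tensor, fully covariant, with the same index conventions as `Riemann` -/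
  Weyl : ∀ p : Point, Vec p →ₗ[ℝ] Vec p →ₗ[ℝ] Vec p →ₗ[ℝ] Vec p →ₗ[ℝ] ℝ
  weyl_antisym₁ : ∀ (p : Point) (x y z w : Vec p), Weyl p x y z w = - Weyl p y x z w
  weyl_antisym₂ : ∀ (p : Point) (x y z w : Vec p), Weyl p x y z w = - Weyl p x y w z
  weyl_pair_symm : ∀ (p : Point) (x y z w : Vec p), Weyl p x y z w = Weyl p z w x y
  /-- the Weyl tensor is totally trace-free -/
  weyl_traceFree : ∀ (p : Point) (b : Module.Basis (Fin D) ℝ (Vec p)) (s : Fin D → ℝ),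
    (∀ i j : Fin D, g p (b i) (b j) = if i = j then s i else 0) →
    ∀ x y : Vec p, (∑ i : Fin D, s i * Weyl p (b i) x (b i) y) = 0
  /-- the decomposition of the Riemann tensor into its Weyl, Ricci and scalar parts -/
  weyl_decomposition : 3 ≤ D → ∀ (p : Point) (x y z w : Vec p),
    Riemann p x y z w =
      Weyl p x y z w
      + ((D : ℝ) - 2)⁻¹ * (g p x z * Ricci p y w - g p x w * Ricci p y z
          + g p y w * Ricci p x z - g p y z * Ricci p x w)
      - Scal p / (((D : ℝ) - 1) * ((D : ℝ) - 2))
          * (g p x z * g p y w - g p x w * g p y z)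

attribute [instance] Spacetime.vecGroup Spacetime.vecModule Spacetime.vecFin

namespace Spacetime

variable {D : ℕ} (X : Spacetime D)

/-- transport of a tangent vector along an equality of base points -/
def vcast {p q : X.Point} (h : p = q) (v : X.Vec p) : X.Vec q := h ▸ v

/-- an affinely parametrised geodesic, given by a curve together with its velocity field -/
def IsGeodesic (c : ℝ → X.Point) (v : ∀ t, X.Vec (c t)) : Prop :=
  X.IsVelocity c v ∧ ∀ t : ℝ, X.covDerivAlong c v t = 0

/-- a null affinely parametrised geodesic -/
def IsNullGeodesic (c : ℝ → X.Point) (v : ∀ t, X.Vec (c t)) : Prop :=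
  X.IsGeodesic c v ∧ ∀ t : ℝ, X.g (c t) (v t) (v t) = 0

end Spacetime

/-- A hypersurface `S` of an abstract spacetime, given by its carrier set together with
its tangent hyperplanes, a unit normal, and its shape operator (the second fundamental
form with one index raised). -/
structure Hypersurface {D : ℕ} (X : Spacetime D) where
  carrier : Set X.Point
  /-- the tangent hyperplane `T_p S ⊂ T_p M` -/
  tangent : ∀ (p : X.Point), p ∈ carrier → Submodule ℝ (X.Vec p)
  tangent_rank : ∀ (p : X.Point) (hp : p ∈ carrier),
    Module.finrank ℝ (tangent p hp) = D - 1
  /-- the unit normal `n` of `S` -/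
  normal : ∀ (p : X.Point), p ∈ carrier → X.Vec p
  normal_orth : ∀ (p : X.Point) (hp : p ∈ carrier),
    ∀ v ∈ tangent p hp, X.g p (normal p hp) v = 0
  /-- the shape operator `χ^a{}_b` of `S`, extended to all of `T_p M` by `χ(n) = 0` -/
  shape : ∀ (p : X.Point), p ∈ carrier → (X.Vec p →ₗ[ℝ] X.Vec p)
  shape_symm : ∀ (p : X.Point) (hp : p ∈ carrier) (u v : X.Vec p),
    X.g p (shape p hp u) v = X.g p (shape p hp v) u
  shape_normal : ∀ (p : X.Point) (hp : p ∈ carrier), shape p hp (normal p hp) = 0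
  shape_tangent : ∀ (p : X.Point) (hp : p ∈ carrier) (u : X.Vec p),
    shape p hp u ∈ tangent p hp
  /-- Gauss–Weingarten relation: along any curve inside the hypersurface, the second
  fundamental form applied to the velocity is minus the normal component of the
  acceleration, `χ(v,v) = − g(n, ∇_v v)`. -/
  sff_spec : ∀ (c : ℝ → X.Point) (v : ∀ t, X.Vec (c t)), X.IsVelocity c v →
    ∀ (hc : ∀ t, c t ∈ carrier) (t : ℝ),
      X.g (c t) (shape (c t) (hc t) (v t)) (v t)
        = - X.g (c t) (normal (c t) (hc t)) (X.covDerivAlong c v t)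

namespace Hypersurface

variable {D : ℕ} {X : Spacetime D} (S : Hypersurface X)

/-- the (fully covariant) second fundamental form `χ_{ab}` of `S` -/
def sff (p : X.Point) (hp : p ∈ S.carrier) (u v : X.Vec p) : ℝ :=
  X.g p (S.shape p hp u) v

/-- the trace `Θ = h^{ab} χ_{ab} = χ^a{}_a` of the second fundamental form -/
def theta (p : X.Point) (hp : p ∈ S.carrier) : ℝ :=
  LinearMap.trace ℝ (X.Vec p) (S.shape p hp)

/-- the projector `h^a{}_b = δ^a{}_b − n^a n_b` onto `S` (for a unit spacelike normal);
`g(proj ·, ·)` is the induced metric `h_{ab}`. -/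
def proj (p : X.Point) (hp : p ∈ S.carrier) : X.Vec p →ₗ[ℝ] X.Vec p :=
  LinearMap.id - (X.g p (S.normal p hp)).smulRight (S.normal p hp)

/-- the trace-free part `σ_{ab} = χ_{ab} − Θ h_{ab}/(D−1)` of the second
fundamental form of `S` -/
def sigma (p : X.Point) (hp : p ∈ S.carrier) (u v : X.Vec p) : ℝ :=
  X.g p ((S.shape p hp - (S.theta p hp / ((D : ℝ) - 1)) • S.proj p hp) u) v

/-- a timelike hypersurface: the unit normal is spacelike -/
def IsTimelike : Prop :=
  ∀ (p : X.Point) (hp : p ∈ S.carrier), X.g p (S.normal p hp) (S.normal p hp) = 1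

/-- nowhere spacelike: at each point there is a nonzero causal tangent vector -/
def NowhereSpacelike : Prop :=
  ∀ (p : X.Point) (hp : p ∈ S.carrier), ∃ v ∈ S.tangent p hp, v ≠ 0 ∧ X.g p v v ≤ 0

/-- **Photon surface** (Claudel–Virbhadra–Ellis): an immersed nowhere-spacelike
hypersurface `S` such that for every `p ∈ S` and every null `k ∈ T_p S` there is a null
geodesic `γ : (−ε, ε) → M` with `γ(0) = p`, `γ̇(0) = k`, whose image lies in `S`. -/
def IsPhotonSurface : Prop :=
  S.NowhereSpacelike ∧
  ∀ (p : X.Point) (hp : p ∈ S.carrier) (k : X.Vec p),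
    k ∈ S.tangent p hp → X.g p k k = 0 →
    ∃ (c : ℝ → X.Point) (v : ∀ t, X.Vec (c t)) (ε : ℝ),
      0 < ε ∧ X.IsVelocity c v ∧
      (∀ t : ℝ, |t| < ε → X.covDerivAlong c v t = 0) ∧
      (∀ t : ℝ, |t| < ε → X.g (c t) (v t) (v t) = 0) ∧
      (∃ h : c 0 = p, X.vcast h (v 0) = k) ∧
      (∀ t : ℝ, |t| < ε → c t ∈ S.carrier)

end Hypersurface

/-- Let `S` be a timelike photon surface of a spacetime of dimension
`≥ 3` with unit normal `n`, let `γ` be a null geodesic in `S` through `p` with tangent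
`k`, and let `Y` be a deviation vector field along `γ` (a solution of the geodesic
deviation equation) with `Y|_p ∝ n|_p`.  Then the acceleration scalar
`a := g(Y, ∇_k ∇_k Y)` at `p` equals `− Y² R_{acbd} n^a k^c n^b k^d` with
`Y² := g(Y,Y) > 0`; consequently `γ` is stable at `p` (`a < 0`) iff
`R_{acbd} k^a n^c k^b n^d > 0`, unstable (`a > 0`) iff `R_{acbd} k^a n^c k^b n^d < 0`,
and marginally stable (`a = 0`) iff `R_{acbd} k^a n^c k^b n^d = 0`. -/
theorem stability_via_riemann {D : ℕ} (hD : 3 ≤ D) (X : Spacetime D)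
    (S : Hypersurface X) (hTL : S.IsTimelike) (hPS : S.IsPhotonSurface)
    (p : X.Point) (hp : p ∈ S.carrier)
    -- `γ` : a null geodesic contained in `S`, passing through `p` with tangent `k`
    (c : ℝ → X.Point) (v : ∀ t, X.Vec (c t)) (hγ : X.IsNullGeodesic c v)
    (hγS : ∀ t : ℝ, c t ∈ S.carrier) (h0 : c 0 = p)
    (k : X.Vec p) (hk : X.vcast h0 (v 0) = k)
    -- `Y` : a deviation vector field along `γ`, i.e. a solution of the geodesic
    -- deviation equation `∇_k ∇_k Y = −R(·, k, Y, k)` (fully lowered form)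
    (Y : ∀ t, X.Vec (c t))
    (hdev : ∀ (t : ℝ) (w : X.Vec (c t)),
      X.g (c t) w (X.covDerivAlong c (X.covDerivAlong c Y) t)
        = - X.Riemann (c t) w (v t) (Y t) (v t))
    -- `Y|_p ∝ n|_p`
    (lam : ℝ) (hlam : lam ≠ 0) (hY0 : X.vcast h0 (Y 0) = lam • S.normal p hp)
    -- the acceleration scalar `a = g(Y, ∇_k ∇_k Y)` at `p`
    (a : ℝ)
    (ha : a = X.g p (X.vcast h0 (Y 0))
      (X.vcast h0 (X.covDerivAlong c (X.covDerivAlong c Y) 0))) :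
    (a = - (X.g p (X.vcast h0 (Y 0)) (X.vcast h0 (Y 0)))
          * X.Riemann p (S.normal p hp) k (S.normal p hp) k)
    ∧ 0 < X.g p (X.vcast h0 (Y 0)) (X.vcast h0 (Y 0))
    ∧ (a < 0 ↔ 0 < X.Riemann p k (S.normal p hp) k (S.normal p hp))
    ∧ (0 < a ↔ X.Riemann p k (S.normal p hp) k (S.normal p hp) < 0)
    ∧ (a = 0 ↔ X.Riemann p k (S.normal p hp) k (S.normal p hp) = 0) := by
  subst h0
  have hvc : ∀ w : X.Vec (c 0), X.vcast rfl w = w := fun _ => rfl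
  rw [hvc] at hk hY0
  rw [hvc, hvc] at ha
  set n := S.normal (c 0) hp with hn
  have hgnn : X.g (c 0) n n = 1 := hTL (c 0) hp
  have ha' : a = - X.Riemann (c 0) (Y 0) (v 0) (Y 0) (v 0) := by
    rw [ha]; exact hdev 0 (Y 0)
  have hgYY : X.g (c 0) (Y 0) (Y 0) = lam ^ 2 := by
    rw [hY0]; simp [hgnn]; ring
  have hpos : 0 < X.g (c 0) (Y 0) (Y 0) := by
    rw [hgYY]; positivity
  have hR : X.Riemann (c 0) (Y 0) (v 0) (Y 0) (v 0)
      = lam ^ 2 * X.Riemann (c 0) n k n k := by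
    rw [hY0, hk]; simp; ring
  have hsym : X.Riemann (c 0) k n k n = X.Riemann (c 0) n k n k := by
    rw [X.riemann_antisym₁, X.riemann_antisym₂]; ring_nf
  have haf : a = - lam ^ 2 * X.Riemann (c 0) n k n k := by
    rw [ha', hR]; ring
  have hl2 : (0:ℝ) < lam ^ 2 := by positivity
  simp only [hvc]
  refine ⟨by rw [haf, hgYY], hpos, ?_, ?_, ?_⟩
  · rw [haf, hsym]
    constructor
    · intro h; nlinarith
    · intro h; nlinarith
  · rw [haf, hsym]
    constructor
    · intro h; nlinarith
    · intro h; nlinarith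
  · rw [haf, hsym]
    constructor
    · intro h; nlinarith [hl2]
    · intro h; rw [h]; ring
end
end

section
/- Let (M, g) be a conformally flat spacetime of dimension D ≥ 3 satisfying the null energy condition (R_{ab} k^a k^b ≥ 0 for all null vectors k). Then every timelike photon surface S of (M, g) is stable: for every p ∈ S and every null vector k ∈ T_pS, R_{acbd} k^a n^c k^b n^d ≥ 0, where n is the unit normal of S. -/
set_option autoImplicit false

noncomputable section

/-- Let `(M,g)` be a conformally flat spacetime (vanishing Weyl
tensor) of dimension `D ≥ 3` satisfying the null energy condition
(`R_{ab} k^a k^b ≥ 0` for all null `k`).  Then every timelike photon surface `S` is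
stable: for every `p ∈ S` and every null `k ∈ T_p S`,
`R_{acbd} k^a n^c k^b n^d ≥ 0`, where `n` is the unit normal of `S`. -/
theorem conformally_flat_NEC_photon_surface_stable {D : ℕ} (hD : 3 ≤ D)
    (X : Spacetime D)
    -- conformal flatness: the Weyl tensor vanishes identically
    (hCF : ∀ (p : X.Point) (x y z w : X.Vec p), X.Weyl p x y z w = 0)
    -- the null energy condition
    (hNEC : ∀ (p : X.Point) (k : X.Vec p), X.g p k k = 0 → 0 ≤ X.Ricci p k k)
    (S : Hypersurface X) (hTL : S.IsTimelike) (hPS : S.IsPhotonSurface) :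
    ∀ (p : X.Point) (hp : p ∈ S.carrier) (k : X.Vec p),
      k ∈ S.tangent p hp → X.g p k k = 0 →
      0 ≤ X.Riemann p k (S.normal p hp) k (S.normal p hp) := by
  intro p hp k hk hnull
  have hgkn : X.g p k (S.normal p hp) = 0 := by
    rw [X.g_symm]; exact S.normal_orth p hp k hk
  have hgnk : X.g p (S.normal p hp) k = 0 := S.normal_orth p hp k hk
  have hnn : X.g p (S.normal p hp) (S.normal p hp) = 1 := hTL p hp
  have hdec := X.weyl_decomposition hD p k (S.normal p hp) k (S.normal p hp)
  rw [hCF, hnull, hgkn, hgnk, hnn] at hdec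
  have hric : 0 ≤ X.Ricci p k k := hNEC p k hnull
  have h3 : (3:ℝ) ≤ (D:ℝ) := by exact_mod_cast hD
  have hpos : (0:ℝ) < ((D:ℝ) - 2)⁻¹ := inv_pos.mpr (by linarith)
  have heq : X.Riemann p k (S.normal p hp) k (S.normal p hp)
      = ((D:ℝ) - 2)⁻¹ * X.Ricci p k k := by rw [hdec]; ring
  rw [heq]
  exact mul_nonneg hpos.le hric
end
end

section
/- Let (M, g) be a three-dimensional spacetime satisfying the null energy condition (R_{ab} k^a k^b ≥ 0 for all null vectors k). Then every timelike photon surface S of (M, g) is stable: for every p ∈ S and every null vector k ∈ T_pS, R_{acbd} k^a n^c k^b n^d ≥ 0, where n is the unit normal of S. Consequently, a photon surface with an unstable null geodesic can exist only in spacetimes of dimension ≥ 4 when the null energy condition holds. -/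
set_option autoImplicit false

noncomputable section

/-- In three dimensions the Weyl tensor vanishes identically: it has the pair
symmetries of the curvature tensor and is totally trace-free, and in dimension `3`
these algebraic conditions force it to be zero. -/
theorem weyl_eq_zero_of_dim_three (X : Spacetime 3) (p : X.Point)
    (x y z v : X.Vec p) : X.Weyl p x y z v = 0 := by
  obtain ⟨b, hb⟩ := X.lorentzian p
  -- abbreviation for components
  have sa1 : ∀ i j k l : Fin 3,
      X.Weyl p (b i) (b j) (b k) (b l) = - X.Weyl p (b j) (b i) (b k) (b l) :=
    fun i j k l => X.weyl_antisym₁ p _ _ _ _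
  have sa2 : ∀ i j k l : Fin 3,
      X.Weyl p (b i) (b j) (b k) (b l) = - X.Weyl p (b i) (b j) (b l) (b k) :=
    fun i j k l => X.weyl_antisym₂ p _ _ _ _
  have sps : ∀ i j k l : Fin 3,
      X.Weyl p (b i) (b j) (b k) (b l) = X.Weyl p (b k) (b l) (b i) (b j) :=
    fun i j k l => X.weyl_pair_symm p _ _ _ _
  have z1 : ∀ (i k l : Fin 3), X.Weyl p (b i) (b i) (b k) (b l) = 0 := by
    intro i k l
    have := X.weyl_antisym₁ p (b i) (b i) (b k) (b l); linarith
  have z2 : ∀ (i j k : Fin 3), X.Weyl p (b i) (b j) (b k) (b k) = 0 := by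
    intro i j k
    have := X.weyl_antisym₂ p (b i) (b j) (b k) (b k); linarith
  -- the trace-free condition in the orthonormal basis
  have htr : ∀ j l : Fin 3,
      - X.Weyl p (b 0) (b j) (b 0) (b l) + X.Weyl p (b 1) (b j) (b 1) (b l)
        + X.Weyl p (b 2) (b j) (b 2) (b l) = 0 := by
    intro j l
    have h := X.weyl_traceFree p b (fun i => if (i : ℕ) = 0 then (-1 : ℝ) else 1)
      hb (b j) (b l)
    simpa [Fin.sum_univ_three] using h
  -- the six independent components vanish
  have hB : X.Weyl p (b 0) (b 1) (b 0) (b 2) = 0 := by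
    have h := htr 1 2
    have h1 := z1 1 (1 : Fin 3) 2
    have h2 := z2 2 1 2
    have h3 := sa1 1 1 1 2
    have h4 := sa2 2 1 2 2
    linarith
  have hC : X.Weyl p (b 0) (b 1) (b 1) (b 2) = 0 := by
    have h := htr 0 2
    have h1 := z1 0 (0 : Fin 3) 2
    have h2 := z2 2 0 2
    have h3 := sa1 1 0 1 2
    linarith
  have hE : X.Weyl p (b 0) (b 2) (b 1) (b 2) = 0 := by
    have h := htr 0 1
    have h1 := z1 0 (0 : Fin 3) 1
    have h2 := z2 1 0 1
    -- X.Weyl p (b 2) (b 0) (b 2) (b 1) = X.Weyl p (b 0) (b 2) (b 1) (b 2)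
    have h3 := sa1 2 0 2 1
    have h4 := sa2 0 2 2 1
    linarith
  have hADF : X.Weyl p (b 0) (b 1) (b 0) (b 1) = 0 ∧
      X.Weyl p (b 0) (b 2) (b 0) (b 2) = 0 ∧
      X.Weyl p (b 1) (b 2) (b 1) (b 2) = 0 := by
    have h00 := htr 0 0
    have h11 := htr 1 1
    have h22 := htr 2 2
    have e1 := z1 0 (0 : Fin 3) 0
    have e2 := z1 1 (1 : Fin 3) 1
    have e3 := z1 2 (2 : Fin 3) 2
    -- rewrite the components appearing in the traces in canonical form
    have f1 := sa1 1 0 1 0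
    have f2 := sa2 0 1 1 0
    have f3 := sa1 2 0 2 0
    have f4 := sa2 0 2 2 0
    have f5 := sa1 2 1 2 1
    have f6 := sa2 1 2 2 1
    refine ⟨by linarith, by linarith, by linarith⟩
  obtain ⟨hA, hD, hF⟩ := hADF
  have tri : ∀ m : Fin 3, m = 0 ∨ m = 1 ∨ m = 2 := by decide
  -- all components with first pair (0,1), (0,2), (1,2) vanish
  have h01 : ∀ k l : Fin 3, X.Weyl p (b 0) (b 1) (b k) (b l) = 0 := by
    intro k l
    rcases tri k with rfl | rfl | rfl <;> rcases tri l with rfl | rfl | rfl <;>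
      first
        | exact z2 _ _ _
        | exact hA
        | exact hB
        | exact hC
        | linarith [sa2 0 1 0 1, sa2 0 1 0 2, sa2 0 1 1 2, hA, hB, hC]
  have h02 : ∀ k l : Fin 3, X.Weyl p (b 0) (b 2) (b k) (b l) = 0 := by
    intro k l
    rcases tri k with rfl | rfl | rfl <;> rcases tri l with rfl | rfl | rfl <;>
      first
        | exact z2 _ _ _
        | exact hD
        | exact hE
        | linarith [sa2 0 2 0 1, sa2 0 2 0 2, sa2 0 2 1 2, sps 0 2 0 1,
            sps 0 2 1 0, sa2 0 1 0 2, hB, hD, hE]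
  have h12 : ∀ k l : Fin 3, X.Weyl p (b 1) (b 2) (b k) (b l) = 0 := by
    intro k l
    rcases tri k with rfl | rfl | rfl <;> rcases tri l with rfl | rfl | rfl <;>
      first
        | exact z2 _ _ _
        | exact hF
        | linarith [sa2 1 2 0 1, sa2 1 2 0 2, sa2 1 2 1 2, sps 1 2 0 1,
            sps 1 2 1 0, sps 1 2 0 2, sps 1 2 2 0, sa2 0 1 1 2, sa2 0 2 1 2,
            hC, hE, hF]
  -- hence all components vanish
  have hall : ∀ i j k l : Fin 3, X.Weyl p (b i) (b j) (b k) (b l) = 0 := by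
    intro i j k l
    rcases tri i with rfl | rfl | rfl <;> rcases tri j with rfl | rfl | rfl <;>
      first
        | exact z1 _ _ _
        | exact h01 _ _
        | exact h02 _ _
        | exact h12 _ _
        | linarith [sa1 1 0 k l, sa1 2 0 k l, sa1 2 1 k l,
            h01 k l, h02 k l, h12 k l]
  -- expand arbitrary vectors in the basis
  have hx := (b.sum_repr x).symm
  have hy := (b.sum_repr y).symm
  have hz := (b.sum_repr z).symm
  have hv := (b.sum_repr v).symm
  rw [hx, hy, hz, hv]
  simp only [map_sum, map_smul, LinearMap.sum_apply, LinearMap.smul_apply,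
    smul_eq_mul, hall, mul_zero, Finset.sum_const_zero]

/-- Let `(M,g)` be a three-dimensional spacetime satisfying the null
energy condition (`R_{ab} k^a k^b ≥ 0` for all null `k`).  Then every timelike photon
surface `S` is stable: for every `p ∈ S` and every null `k ∈ T_p S`,
`R_{acbd} k^a n^c k^b n^d ≥ 0` (`n` the unit normal).  Consequently, a photon surface
with an unstable null geodesic (one with `R_{acbd} k^a n^c k^b n^d < 0`) can exist only
in dimension `≥ 4` when the null energy condition holds. -/
theorem three_dimensional_NEC_photon_surface_stable (X : Spacetime 3)
    (hNEC : ∀ (p : X.Point) (k : X.Vec p), X.g p k k = 0 → 0 ≤ X.Ricci p k k)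
    (S : Hypersurface X) (hTL : S.IsTimelike) (hPS : S.IsPhotonSurface) :
    (∀ (p : X.Point) (hp : p ∈ S.carrier) (k : X.Vec p),
        k ∈ S.tangent p hp → X.g p k k = 0 →
        0 ≤ X.Riemann p k (S.normal p hp) k (S.normal p hp))
    ∧ ¬ ∃ (p : X.Point) (hp : p ∈ S.carrier) (k : X.Vec p),
        k ∈ S.tangent p hp ∧ X.g p k k = 0 ∧
        X.Riemann p k (S.normal p hp) k (S.normal p hp) < 0 := by
  have main : ∀ (p : X.Point) (hp : p ∈ S.carrier) (k : X.Vec p),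
      k ∈ S.tangent p hp → X.g p k k = 0 →
      0 ≤ X.Riemann p k (S.normal p hp) k (S.normal p hp) := by
    intro p hp k hk hnull
    set n := S.normal p hp with hn
    have hn1 : X.g p n n = 1 := hTL p hp
    have hkn : X.g p n k = 0 := S.normal_orth p hp k hk
    have hnk : X.g p k n = 0 := by rw [X.g_symm]; exact hkn
    have hdec := X.weyl_decomposition (by norm_num) p k n k n
    rw [weyl_eq_zero_of_dim_three, hnull, hnk, hkn, hn1] at hdec
    have hR : X.Riemann p k n k n = X.Ricci p k k := by
      rw [hdec]; norm_num
    rw [hR]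
    exact hNEC p k hnull
  refine ⟨main, ?_⟩
  rintro ⟨p, hp, k, hk, hnull, hlt⟩
  exact absurd (main p hp k hk hnull) (not_le.mpr hlt)
end
end
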